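/- Let m, d be natural numbers, let B : MvPolynomial (Fin 2) ℝ →ₗ[ℝ] (Fin m → ℝ) be a linear map, and let b ∈ ℝᵐ (with ℝᵐ carrying the Euclidean inner product ⟨·,·⟩ and norm ‖·‖). Suppose there exists a binary form p of degree 2d that is a sum of squares of binary forms of degree d with B(p) = b. Let u₁, u₂ be binary forms of degree d such that: (gradient) ⟨B(u₁v₁ + u₂v₂), B(u₁² + u₂²) − b⟩ = 0 for all binary forms v₁, v₂ of degree d; and (Hessian) ⟨B(v₁² + v₂²), B(u₁² + u₂²) − b⟩ + 2‖B(u₁v₁ + u₂v₂)‖² ≥ 0 for all binary forms v₁, v₂ of degree d. Then B(u₁² + u₂²) = b. -/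

import Mathlib

noncomputable def dh : MvPolynomial (Fin 2) ℝ →ₐ[ℝ] Polynomial ℝ :=
  MvPolynomial.aeval ![Polynomial.X, 1]

noncomputable def hmL (k : ℕ) : Polynomial ℝ →ₗ[ℝ] MvPolynomial (Fin 2) ℝ :=
  ∑ j ∈ Finset.range (k+1),
    (MvPolynomial.monomial (R := ℝ)
      (Finsupp.single (0 : Fin 2) j + Finsupp.single (1 : Fin 2) (k - j))).comp
      (Polynomial.lcoeff ℝ j)

lemma hmL_apply (k : ℕ) (w : Polynomial ℝ) :
    hmL k w = ∑ j ∈ Finset.range (k+1),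
      MvPolynomial.monomial (Finsupp.single (0 : Fin 2) j + Finsupp.single (1 : Fin 2) (k - j))
        (w.coeff j) := by
  simp [hmL, LinearMap.sum_apply]

lemma finsupp_degree_two (m : Fin 2 →₀ ℕ) : m.degree = m 0 + m 1 := by
  rw [show m.degree = ∑ i : Fin 2, m i from Finset.sum_subset (Finset.subset_univ _)
    (by intro x _ hx; exact Finsupp.notMem_support_iff.mp hx), Fin.sum_univ_two]

lemma hm_isHomogeneous (k : ℕ) (w : Polynomial ℝ) : (hmL k w).IsHomogeneous k := by
  rw [hmL_apply]
  apply MvPolynomial.IsHomogeneous.sum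
  intro j hj
  have hj' := Finset.mem_range.mp hj
  apply MvPolynomial.isHomogeneous_monomial
  rw [finsupp_degree_two]
  simp [Finsupp.single_apply]
  omega

lemma dh_monomial (m : Fin 2 →₀ ℕ) (c : ℝ) :
    dh (MvPolynomial.monomial m c) = Polynomial.C c * Polynomial.X ^ (m 0) := by
  rw [dh, MvPolynomial.aeval_monomial]
  rw [Finsupp.prod_fintype _ _ (fun i => pow_zero _), Fin.prod_univ_two]
  simp [Polynomial.algebraMap_eq]

lemma dh_natDegree_le {k : ℕ} {p : MvPolynomial (Fin 2) ℝ} (hp : p.IsHomogeneous k) :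
    (dh p).natDegree ≤ k := by
  conv_lhs => rw [p.as_sum]
  rw [map_sum]
  apply Polynomial.natDegree_sum_le_of_forall_le
  intro m hm
  rw [dh_monomial]
  refine le_trans (Polynomial.natDegree_C_mul_le _ _) ?_
  refine le_trans (Polynomial.natDegree_X_pow_le _) ?_
  have h1 := hp (MvPolynomial.mem_support_iff.mp hm)
  rw [show (Finsupp.weight 1) m = m.degree by rw [Finsupp.degree_eq_weight_one]; rfl, finsupp_degree_two] at h1
  omega

lemma dh_hm (k : ℕ) (w : Polynomial ℝ) (hw : w.natDegree ≤ k) : dh (hmL k w) = w := by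
  rw [hmL_apply, map_sum]
  have h : ∀ j ∈ Finset.range (k+1), dh (MvPolynomial.monomial
      (Finsupp.single (0 : Fin 2) j + Finsupp.single (1 : Fin 2) (k - j)) (w.coeff j))
      = Polynomial.monomial j (w.coeff j) := by
    intro j hj
    rw [dh_monomial]
    rw [show (Finsupp.single (0 : Fin 2) j + Finsupp.single (1 : Fin 2) (k - j)) 0 = j by
      simp [Finsupp.single_apply]]
    exact Polynomial.C_mul_X_pow_eq_monomial
  rw [Finset.sum_congr rfl h]
  exact (w.as_sum_range' (k+1) (by omega)).symm

lemma hm_dh {k : ℕ} {p : MvPolynomial (Fin 2) ℝ} (hp : p.IsHomogeneous k) :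
    hmL k (dh p) = p := by
  conv_lhs => rw [p.as_sum]
  rw [map_sum, map_sum]
  conv_rhs => rw [p.as_sum]
  apply Finset.sum_congr rfl
  intro m hm
  have hdeg : m 0 + m 1 = k := by
    have h1 := hp (MvPolynomial.mem_support_iff.mp hm)
    rw [show (Finsupp.weight 1) m = m.degree by rw [Finsupp.degree_eq_weight_one]; rfl, finsupp_degree_two] at h1
    exact h1
  rw [dh_monomial, hmL_apply]
  rw [Finset.sum_eq_single_of_mem (m 0) (Finset.mem_range.mpr (by omega))]
  · rw [Polynomial.coeff_C_mul, Polynomial.coeff_X_pow, if_pos rfl, mul_one]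
    have he : (Finsupp.single (0 : Fin 2) (m 0) + Finsupp.single (1 : Fin 2) (k - m 0)) = m := by
      apply Finsupp.ext
      intro i
      fin_cases i
      · simp [Finsupp.single_apply]
      · simp [Finsupp.single_apply]; omega
    rw [he]
  · intro j hj hne
    simp [Polynomial.coeff_C_mul, Polynomial.coeff_X_pow, hne]

lemma hm_injective_on_homog {k : ℕ} {p q : MvPolynomial (Fin 2) ℝ}
    (hp : p.IsHomogeneous k) (hq : q.IsHomogeneous k) (h : dh p = dh q) : p = q := by
  rw [← hm_dh hp, ← hm_dh hq, h]

lemma hm_mul (k₁ k₂ : ℕ) (w₁ w₂ : Polynomial ℝ) (h₁ : w₁.natDegree ≤ k₁)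
    (h₂ : w₂.natDegree ≤ k₂) : hmL (k₁ + k₂) (w₁ * w₂) = hmL k₁ w₁ * hmL k₂ w₂ := by
  apply hm_injective_on_homog (hm_isHomogeneous _ _)
    ((hm_isHomogeneous k₁ w₁).mul (hm_isHomogeneous k₂ w₂))
  rw [dh_hm _ _ (le_trans (Polynomial.natDegree_mul_le) (by omega)), map_mul,
    dh_hm _ _ h₁, dh_hm _ _ h₂]

open Polynomial

noncomputable def mc : Polynomial ℝ →+* Polynomial ℂ := Polynomial.mapRingHom (algebraMap ℝ ℂ)

lemma mc_coeff (p : ℝ[X]) (n : ℕ) : (mc p).coeff n = (p.coeff n : ℂ) := by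
  simp [mc, Polynomial.coeff_map]

lemma mc_natDegree (p : ℝ[X]) : (mc p).natDegree = p.natDegree :=
  Polynomial.natDegree_map_eq_of_injective (algebraMap ℝ ℂ).injective p

lemma mc_injective : Function.Injective mc :=
  Polynomial.map_injective _ (algebraMap ℝ ℂ).injective

lemma CI_mul_CI : (Polynomial.C Complex.I) * (Polynomial.C Complex.I) = (-1 : ℂ[X]) := by
  rw [← Polynomial.C_mul, Complex.I_mul_I, map_neg, map_one]

lemma real_split (A B Q : ℝ[X]) (h : mc A + Polynomial.C Complex.I * mc B = mc Q) :
    A = Q ∧ B = 0 := by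
  have key : ∀ n : ℕ, A.coeff n = Q.coeff n ∧ B.coeff n = 0 := by
    intro n
    have h' := congrArg (fun p => Polynomial.coeff p n) h
    simp only [Polynomial.coeff_add, Polynomial.coeff_C_mul, mc_coeff] at h'
    have hre := congrArg Complex.re h'
    have him := congrArg Complex.im h'
    simp at hre him
    exact ⟨hre, him⟩
  constructor
  · exact Polynomial.ext fun n => (key n).1
  · exact Polynomial.ext fun n => by simpa using (key n).2

lemma coeff_sum_CXpow (f : ℕ → ℝ) (N n : ℕ) :
    (∑ j ∈ Finset.range N, Polynomial.C (f j) * Polynomial.X ^ j).coeff n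
      = if n < N then f n else 0 := by
  rw [Polynomial.finset_sum_coeff]
  by_cases h : n < N
  · rw [if_pos h, Finset.sum_eq_single_of_mem n (Finset.mem_range.mpr h)]
    · simp
    · intro j _ hne
      simp [Polynomial.coeff_C_mul, Polynomial.coeff_X_pow, (Ne.symm hne : n ≠ j)]
  · rw [if_neg h]
    apply Finset.sum_eq_zero
    intro j hj
    have : n ≠ j := by have := Finset.mem_range.mp hj; omega
    simp [Polynomial.coeff_C_mul, Polynomial.coeff_X_pow, this]

lemma reim (z : ℂ[X]) : ∃ zr zi : ℝ[X], zr.natDegree ≤ z.natDegree ∧ zi.natDegree ≤ z.natDegree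
    ∧ z = mc zr + Polynomial.C Complex.I * mc zi := by
  refine ⟨∑ n ∈ Finset.range (z.natDegree + 1), Polynomial.C (z.coeff n).re * Polynomial.X ^ n,
    ∑ n ∈ Finset.range (z.natDegree + 1), Polynomial.C (z.coeff n).im * Polynomial.X ^ n,
    ?_, ?_, ?_⟩
  · apply Polynomial.natDegree_sum_le_of_forall_le
    intro n hn
    refine le_trans (Polynomial.natDegree_C_mul_le _ _) ?_
    refine le_trans (Polynomial.natDegree_X_pow_le _) ?_
    have := Finset.mem_range.mp hn; omega
  · apply Polynomial.natDegree_sum_le_of_forall_le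
    intro n hn
    refine le_trans (Polynomial.natDegree_C_mul_le _ _) ?_
    refine le_trans (Polynomial.natDegree_X_pow_le _) ?_
    have := Finset.mem_range.mp hn; omega
  · apply Polynomial.ext
    intro n
    simp only [Polynomial.coeff_add, Polynomial.coeff_C_mul, mc_coeff, coeff_sum_CXpow]
    by_cases h : n < z.natDegree + 1
    · rw [if_pos h, if_pos h, mul_comm, Complex.re_add_im]
    · rw [if_neg h, if_neg h]
      have : z.coeff n = 0 := Polynomial.coeff_eq_zero_of_natDegree_lt (by omega)
      simp [this]

lemma mul_split (x y A B : ℝ[X]) :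
    (mc x + Polynomial.C Complex.I * mc y) * (mc A + Polynomial.C Complex.I * mc B)
      = mc (x*A - y*B) + Polynomial.C Complex.I * mc (x*B + y*A) := by
  simp only [map_sub, map_add, map_mul]
  linear_combination (mc y * mc B) * CI_mul_CI

lemma sylv {F : Type*} [Field F] (a b w : F[X]) (hcop : IsCoprime a b) (ha : a ≠ 0)
    (n₁ n₂ : ℕ) (h₂ : a.natDegree ≤ n₂ + 1) (hw : w.natDegree ≤ a.natDegree + n₁)
    (h₃ : b.natDegree + n₂ ≤ a.natDegree + n₁) :
    ∃ v₁ v₂ : F[X], v₁.natDegree ≤ n₁ ∧ v₂.natDegree ≤ n₂ ∧ a * v₁ + b * v₂ = w := by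
  obtain ⟨x, y, hxy⟩ := hcop
  set A : F[X] := a * C a.leadingCoeff⁻¹ with hA
  have hmon : A.Monic := monic_mul_leadingCoeff_inv ha
  set k : F[X] := (y * w) /ₘ A with hk
  set v₂ : F[X] := (y * w) %ₘ A with hv₂
  set v₁ : F[X] := x * w + b * C a.leadingCoeff⁻¹ * k with hv₁
  have hmod : v₂ = y * w - A * k := by
    rw [hv₂, hk, modByMonic_eq_sub_mul_div _ A]
  have hid : a * v₁ + b * v₂ = w := by
    rw [hv₁, hmod, hA]
    linear_combination w * hxy
  have hdv₂ : v₂.natDegree ≤ n₂ := by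
    by_cases hv20 : v₂ = 0
    · simp [hv20]
    · have hlt : v₂.degree < A.degree := degree_modByMonic_lt _ hmon
      rw [hA, degree_mul_leadingCoeff_inv _ ha] at hlt
      have := Polynomial.natDegree_lt_natDegree hv20 hlt
      omega
  refine ⟨v₁, v₂, ?_, hdv₂, hid⟩
  by_cases hv10 : v₁ = 0
  · simp [hv10]
  · have heq : a * v₁ = w - b * v₂ := by linear_combination hid
    have hd1 : (a * v₁).natDegree = a.natDegree + v₁.natDegree := natDegree_mul ha hv10
    have hd2 : (w - b * v₂).natDegree ≤ a.natDegree + n₁ := by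
      refine le_trans (natDegree_sub_le _ _) ?_
      refine max_le hw (le_trans natDegree_mul_le ?_)
      omega
    rw [heq] at hd1
    omega

lemma core {m : ℕ} (d : ℕ) (NN : Polynomial ℝ →ₗ[ℝ] (Fin m → ℝ))
    (L : Polynomial ℝ →ₗ[ℝ] ℝ)
    (u₁ u₂ : Polynomial ℝ) (hu₁ : u₁.natDegree ≤ d) (hu₂ : u₂.natDegree ≤ d)
    (hG : ∀ v₁ v₂ : Polynomial ℝ, v₁.natDegree ≤ d → v₂.natDegree ≤ d →
      L (u₁ * v₁ + u₂ * v₂) = 0)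
    (hH : ∀ v₁ v₂ : Polynomial ℝ, v₁.natDegree ≤ d → v₂.natDegree ≤ d →
      0 ≤ L (v₁^2 + v₂^2) + 2 * ∑ i, (NN (u₁ * v₁ + u₂ * v₂) i)^2) :
    ∀ q : Polynomial ℝ, q.natDegree ≤ d → 0 ≤ L (q^2) := by
  by_cases hz : u₁ = 0 ∧ u₂ = 0
  · intro q hq
    have h := hH q 0 hq (by simp)
    rw [hz.1, hz.2] at h
    simpa using h
  -- main case
  set g := EuclideanDomain.gcd u₁ u₂ with hgdef
  have hg0 : g ≠ 0 := fun h => hz (EuclideanDomain.gcd_eq_zero_iff.mp h)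
  set u₁' := u₁ / g with hu1'def
  set u₂' := u₂ / g with hu2'def
  have hu1e : g * u₁' = u₁ :=
    EuclideanDomain.mul_div_cancel' hg0 (EuclideanDomain.gcd_dvd_left _ _)
  have hu2e : g * u₂' = u₂ :=
    EuclideanDomain.mul_div_cancel' hg0 (EuclideanDomain.gcd_dvd_right _ _)
  have hcop : IsCoprime u₁' u₂' := by
    refine ⟨EuclideanDomain.gcdA u₁ u₂, EuclideanDomain.gcdB u₁ u₂, ?_⟩
    have hab := EuclideanDomain.gcd_eq_gcd_ab u₁ u₂
    apply mul_left_cancel₀ hg0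
    rw [mul_one]
    linear_combination (-1 : Polynomial ℝ) * hab + (EuclideanDomain.gcdA u₁ u₂) * hu1e
      + (EuclideanDomain.gcdB u₁ u₂) * hu2e
  set D := max u₁.natDegree u₂.natDegree with hD
  set γ := g.natDegree with hγ
  have hne : u₁ ≠ 0 ∨ u₂ ≠ 0 := by tauto
  have hγD : γ ≤ D := by
    rcases hne with h | h
    · exact le_trans (Polynomial.natDegree_le_of_dvd (EuclideanDomain.gcd_dvd_left _ _) h)
        (le_max_left _ _)
    · exact le_trans (Polynomial.natDegree_le_of_dvd (EuclideanDomain.gcd_dvd_right _ _) h)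
        (le_max_right _ _)
  have hDd : D ≤ d := max_le hu₁ hu₂
  set c := D - γ with hc
  set e := d - c with he
  have hce : c + e = d := by omega
  have hmul1 : u₁ ≠ 0 → u₁.natDegree = γ + u₁'.natDegree := by
    intro h
    have h1' : u₁' ≠ 0 := fun hh => h (by rw [← hu1e, hh, mul_zero])
    rw [← hu1e]; exact natDegree_mul hg0 h1'
  have hmul2 : u₂ ≠ 0 → u₂.natDegree = γ + u₂'.natDegree := by
    intro h
    have h2' : u₂' ≠ 0 := fun hh => h (by rw [← hu2e, hh, mul_zero])
    rw [← hu2e]; exact natDegree_mul hg0 h2'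
  have hu1'deg : u₁'.natDegree ≤ c := by
    by_cases h : u₁ = 0
    · have : u₁' = 0 := by rw [hu1'def, h, EuclideanDomain.zero_div]
      simp [this]
    · have := hmul1 h
      have h1 : u₁.natDegree ≤ D := le_max_left _ _
      omega
  have hu2'deg : u₂'.natDegree ≤ c := by
    by_cases h : u₂ = 0
    · have : u₂' = 0 := by rw [hu2'def, h, EuclideanDomain.zero_div]
      simp [this]
    · have := hmul2 h
      have h1 : u₂.natDegree ≤ D := le_max_right _ _
      omega
  have hcase : (u₁' ≠ 0 ∧ u₁'.natDegree = c) ∨ (u₂' ≠ 0 ∧ u₂'.natDegree = c) := by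
    by_cases h1 : u₁ = 0
    · have h2 : u₂ ≠ 0 := by tauto
      have h2' : u₂' ≠ 0 := fun hh => h2 (by rw [← hu2e, hh, mul_zero])
      have hd1 : u₁.natDegree = 0 := by rw [h1]; simp
      have := hmul2 h2
      have h2D : u₂.natDegree ≤ D := le_max_right _ _
      right
      refine ⟨h2', ?_⟩
      have : D = u₂.natDegree := by omega
      omega
    · by_cases h2 : u₂.natDegree ≤ u₁.natDegree
      · have h1' : u₁' ≠ 0 := fun hh => h1 (by rw [← hu1e, hh, mul_zero])
        have := hmul1 h1
        have : D = u₁.natDegree := by omega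
        left; constructor; exact h1'; omega
      · have h2' : u₂ ≠ 0 := by
          intro hh; rw [hh] at h2; simp at h2
        have h2'' : u₂' ≠ 0 := fun hh => h2' (by rw [← hu2e, hh, mul_zero])
        have := hmul2 h2'
        have : D = u₂.natDegree := by omega
        right; constructor; exact h2''; omega
  -- representation lemmas
  have REPR2 : ∀ w : Polynomial ℝ, w.natDegree ≤ d + c → ∃ v₁ v₂ : Polynomial ℝ,
      v₁.natDegree ≤ d ∧ v₂.natDegree ≤ d ∧ u₁' * v₁ + u₂' * v₂ = w := by
    intro w hw
    rcases hcase with ⟨h0, hdeg⟩ | ⟨h0, hdeg⟩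
    · obtain ⟨v₁, v₂, hv₁, hv₂, hid⟩ := sylv u₁' u₂' w hcop h0 d d (by omega)
        (by omega) (by omega)
      exact ⟨v₁, v₂, hv₁, hv₂, hid⟩
    · obtain ⟨v₂, v₁, hv₂, hv₁, hid⟩ := sylv u₂' u₁' w hcop.symm h0 d d (by omega)
        (by omega) (by omega)
      exact ⟨v₁, v₂, hv₁, hv₂, by linear_combination hid⟩
  have REPR : ∀ w : Polynomial ℝ, w.natDegree ≤ d + c → ∃ v₁ v₂ : Polynomial ℝ,
      v₁.natDegree ≤ d ∧ v₂.natDegree ≤ d ∧ u₂' * v₁ - u₁' * v₂ = w := by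
    intro w hw
    rcases hcase with ⟨h0, hdeg⟩ | ⟨h0, hdeg⟩
    · have h0' : -u₁' ≠ 0 := by simpa using h0
      obtain ⟨v₁, v₂, hv₁, hv₂, hid⟩ := sylv (-u₁') u₂' w hcop.neg_left h0'
        d d (by rw [natDegree_neg]; omega) (by rw [natDegree_neg]; omega)
        (by rw [natDegree_neg]; omega)
      exact ⟨v₂, v₁, hv₂, hv₁, by linear_combination hid⟩
    · obtain ⟨v₁, v₂, hv₁, hv₂, hid⟩ := sylv u₂' (-u₁') w hcop.symm.neg_right h0
        d d (by omega) (by omega) (by rw [natDegree_neg]; omega)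
      exact ⟨v₁, v₂, hv₁, hv₂, by linear_combination hid⟩
  set s := u₁'^2 + u₂'^2 with hs
  have hs0 : s ≠ 0 := by
    intro h
    have hzero : ∀ x : ℝ, u₁'.eval x = 0 ∧ u₂'.eval x = 0 := by
      intro x
      have hx := congrArg (Polynomial.eval x) h
      simp only [hs, Polynomial.eval_add, Polynomial.eval_pow, Polynomial.eval_zero] at hx
      constructor
      · have h1 : u₁'.eval x ^ 2 = 0 := by nlinarith [sq_nonneg (u₁'.eval x), sq_nonneg (u₂'.eval x)]
        exact pow_eq_zero_iff two_ne_zero |>.mp h1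
      · have h1 : u₂'.eval x ^ 2 = 0 := by nlinarith [sq_nonneg (u₁'.eval x), sq_nonneg (u₂'.eval x)]
        exact pow_eq_zero_iff two_ne_zero |>.mp h1
    have h1 : u₁' = 0 := Polynomial.funext (fun x => by simpa using (hzero x).1)
    have h2 : u₂' = 0 := Polynomial.funext (fun x => by simpa using (hzero x).2)
    exact hz ⟨by rw [← hu1e, h1, mul_zero], by rw [← hu2e, h2, mul_zero]⟩
  have hsdeg : s.natDegree ≤ 2*c := by
    rw [hs]
    refine le_trans (natDegree_add_le _ _) ?_
    rw [natDegree_pow, natDegree_pow]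
    omega
  -- F1 : Hessian at kernel directions
  have F1 : ∀ h : Polynomial ℝ, h.natDegree ≤ e → 0 ≤ L (s * h^2) := by
    intro h hh
    have hv₁ : (u₂' * h).natDegree ≤ d := le_trans natDegree_mul_le (by omega)
    have hv₂ : (-(u₁' * h)).natDegree ≤ d := by
      rw [natDegree_neg]; exact le_trans natDegree_mul_le (by omega)
    have key := hH (u₂' * h) (-(u₁' * h)) hv₁ hv₂
    have e1 : (u₂' * h)^2 + (-(u₁' * h))^2 = s * h^2 := by rw [hs]; ring
    have e2 : u₁ * (u₂' * h) + u₂ * (-(u₁' * h)) = 0 := by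
      rw [← hu1e, ← hu2e]; ring
    rw [e1, e2] at key
    simpa using key
  -- K'' : degenerate directions kill cross terms
  have K2 : ∀ h : Polynomial ℝ, h.natDegree ≤ e → L (s * h^2) = 0 →
      ∀ v₁ v₂ : Polynomial ℝ, v₁.natDegree ≤ d → v₂.natDegree ≤ d →
        L (h * (u₂' * v₁ - u₁' * v₂)) = 0 := by
    intro h hh hnull v₁ v₂ hv₁ hv₂
    by_contra hB
    set Aq := L (v₁^2 + v₂^2) + 2 * ∑ i, (NN (u₁*v₁ + u₂*v₂) i)^2 with hAq
    set Bq := L (h * (u₂'*v₁ - u₁'*v₂)) with hBq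
    set t : ℝ := -(Aq + 1) / (2*Bq) with ht
    have hd₁ : (v₁ + t • (u₂' * h)).natDegree ≤ d := by
      refine le_trans (natDegree_add_le _ _) (max_le hv₁ ?_)
      exact le_trans (natDegree_smul_le _ _) (le_trans natDegree_mul_le (by omega))
    have hd₂ : (v₂ - t • (u₁' * h)).natDegree ≤ d := by
      refine le_trans (natDegree_sub_le _ _) (max_le hv₂ ?_)
      exact le_trans (natDegree_smul_le _ _) (le_trans natDegree_mul_le (by omega))
    have key := hH (v₁ + t • (u₂' * h)) (v₂ - t • (u₁' * h)) hd₁ hd₂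
    have e1 : (v₁ + t • (u₂' * h))^2 + (v₂ - t • (u₁' * h))^2
        = (v₁^2 + v₂^2) + (2*t) • (h * (u₂'*v₁ - u₁'*v₂)) + (t^2) • (s * h^2) := by
      rw [hs]
      simp only [Polynomial.smul_eq_C_mul, map_mul, map_ofNat, map_pow]
      ring
    have e2 : u₁ * (v₁ + t • (u₂'*h)) + u₂ * (v₂ - t • (u₁'*h)) = u₁*v₁ + u₂*v₂ := by
      rw [← hu1e, ← hu2e]
      simp only [Polynomial.smul_eq_C_mul]
      ring
    rw [e1, e2] at key
    rw [map_add, map_add, map_smul, map_smul, hnull] at key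
    have key2 : 0 ≤ Aq + (2*t) * Bq := by
      rw [hAq, hBq]
      simp only [smul_eq_mul, mul_zero, add_zero] at key
      linarith
    have h2B : (2:ℝ)*Bq ≠ 0 := mul_ne_zero two_ne_zero hB
    have ht2 : (2*t) * Bq = -(Aq+1) := by
      rw [ht]
      field_simp
    rw [ht2] at key2
    linarith
  -- base nullity
  have N₀ : ∀ w : Polynomial ℝ, w.natDegree ≤ d + c → L (g * w) = 0 := by
    intro w hw
    obtain ⟨v₁, v₂, hv₁, hv₂, hrep⟩ := REPR2 w hw
    have : g * w = u₁ * v₁ + u₂ * v₂ := by rw [← hrep, ← hu1e, ← hu2e]; ring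
    rw [this]
    exact hG v₁ v₂ hv₁ hv₂
  -- FINAL step : coprime modulus case
  have FINAL : ∀ BB : Polynomial ℝ, BB ≠ 0 → BB ∣ g → IsCoprime BB s →
      (∀ w : Polynomial ℝ, w.natDegree ≤ d + D - BB.natDegree → L (BB * w) = 0) →
      ∀ q : Polynomial ℝ, q.natDegree ≤ d → 0 ≤ L (q^2) := by
    intro BB hBB0 hdvd hcop2 hN q hq
    have hBBγ : BB.natDegree ≤ γ := Polynomial.natDegree_le_of_dvd hdvd hg0
    set U : ℂ[X] := mc u₁' + Polynomial.C Complex.I * mc u₂' with hU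
    set Ub : ℂ[X] := mc u₁' - Polynomial.C Complex.I * mc u₂' with hUb
    have hUUb : U * Ub = mc s := by
      rw [hU, hUb, hs]
      simp only [map_add, map_pow]
      linear_combination (-(mc u₂' * mc u₂')) * CI_mul_CI
    have hUle : U.natDegree ≤ c := by
      rw [hU]
      refine le_trans (natDegree_add_le _ _) (max_le ?_ ?_)
      · rw [mc_natDegree]; exact hu1'deg
      · refine le_trans (Polynomial.natDegree_C_mul_le _ _) ?_
        rw [mc_natDegree]; exact hu2'deg
    have hUc : U.coeff c ≠ 0 := by
      have hexp : U.coeff c = (u₁'.coeff c : ℂ) + Complex.I * (u₂'.coeff c : ℂ) := by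
        rw [hU]
        simp [Polynomial.coeff_add, Polynomial.coeff_C_mul, mc_coeff]
      rw [hexp]
      rcases hcase with ⟨h0, hdeg⟩ | ⟨h0, hdeg⟩
      · have hl : u₁'.coeff c ≠ 0 := by
          rw [← hdeg]
          exact Polynomial.leadingCoeff_ne_zero.mpr h0
        intro hcontra
        apply hl
        have := congrArg Complex.re hcontra
        simpa using this
      · have hl : u₂'.coeff c ≠ 0 := by
          rw [← hdeg]
          exact Polynomial.leadingCoeff_ne_zero.mpr h0
        intro hcontra
        apply hl
        have := congrArg Complex.im hcontra
        simpa using this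
    have hU0 : U ≠ 0 := fun h => hUc (by simp [h])
    have hUdeg : U.natDegree = c := le_antisymm hUle (Polynomial.le_natDegree_of_ne_zero hUc)
    have hcopBU : IsCoprime U (mc BB) := by
      have h1 : IsCoprime (mc BB) (mc s) := hcop2.map mc
      rw [← hUUb] at h1
      exact h1.of_mul_right_left.symm
    have hqdeg : (mc q).natDegree ≤ d := by rw [mc_natDegree]; exact hq
    obtain ⟨α, β, hα, hβ, hαβ⟩ := sylv U (mc BB) (mc q) hcopBU hU0 e (D - BB.natDegree)
      (by omega) (by rw [hUdeg]; omega) (by rw [hUdeg, mc_natDegree]; omega)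
    obtain ⟨h₁p, h₂p, hh₁, hh₂, hαeq⟩ := reim α
    obtain ⟨b₁, b₂, hb₁, hb₂, hβeq⟩ := reim β
    have hh₁e : h₁p.natDegree ≤ e := le_trans hh₁ hα
    have hh₂e : h₂p.natDegree ≤ e := le_trans hh₂ hα
    have hb₁D : b₁.natDegree ≤ D - BB.natDegree := le_trans hb₁ hβ
    have hb₂D : b₂.natDegree ≤ D - BB.natDegree := le_trans hb₂ hβ
    rw [hαeq, hβeq, hU] at hαβ
    have e1' : mc (u₁'*h₁p - u₂'*h₂p + BB*b₁)
        + Polynomial.C Complex.I * mc (u₁'*h₂p + u₂'*h₁p + BB*b₂) = mc q := by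
      simp only [map_add, map_sub, map_mul]
      linear_combination hαβ + (-(mc u₂' * mc h₂p)) * CI_mul_CI
    obtain ⟨E1, E2⟩ := real_split _ _ _ e1'
    set w₀ : Polynomial ℝ := 2*(q*b₁) - (b₁^2 + b₂^2)*BB with hw₀def
    have hw₀ : w₀.natDegree ≤ d + D - BB.natDegree := by
      rw [hw₀def]
      refine le_trans (natDegree_sub_le _ _) (max_le ?_ ?_)
      · refine le_trans natDegree_mul_le ?_
        have h2 : (2 : Polynomial ℝ).natDegree = 0 := by simp
        have h3 : (q*b₁).natDegree ≤ d + (D - BB.natDegree) := le_trans natDegree_mul_le (by omega)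
        omega
      · refine le_trans natDegree_mul_le ?_
        have h4 : (b₁^2 + b₂^2).natDegree ≤ 2*(D - BB.natDegree) := by
          refine le_trans (natDegree_add_le _ _) ?_
          rw [natDegree_pow, natDegree_pow]
          omega
        omega
    have IDENT : q^2 = s*h₁p^2 + s*h₂p^2 + BB*w₀ := by
      rw [hs, hw₀def]
      linear_combination (BB*b₁ - q - u₁'*h₁p + u₂'*h₂p) * E1
        + (BB*b₂ - u₁'*h₂p - u₂'*h₁p) * E2
    rw [IDENT, map_add, map_add]
    have t1 := F1 h₁p hh₁e
    have t2 := F1 h₂p hh₂e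
    have t3 := hN w₀ hw₀
    linarith
  -- iteration
  have ITER : ∀ n : ℕ, ∀ BB : Polynomial ℝ, BB ≠ 0 → BB ∣ g → BB.natDegree ≤ n →
      (∀ w : Polynomial ℝ, w.natDegree ≤ d + D - BB.natDegree → L (BB * w) = 0) →
      ∀ q : Polynomial ℝ, q.natDegree ≤ d → 0 ≤ L (q^2) := by
    intro n
    induction n with
    | zero =>
      intro BB hBB0 hdvd hdeg hN
      have hc0 : BB.coeff 0 ≠ 0 := by
        intro h
        apply hBB0
        rw [Polynomial.eq_C_of_natDegree_eq_zero (by omega : BB.natDegree = 0), h, map_zero]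
      have hBu : IsUnit BB := by
        rw [Polynomial.eq_C_of_natDegree_eq_zero (show BB.natDegree = 0 by omega)]
        exact Polynomial.isUnit_C.mpr (isUnit_iff_ne_zero.mpr hc0)
      obtain ⟨v, hv⟩ := isUnit_iff_exists_inv.mp hBu
      have hcop2 : IsCoprime BB s := ⟨v, 0, by rw [zero_mul, add_zero, mul_comm]; exact hv⟩
      exact FINAL BB hBB0 hdvd hcop2 hN
    | succ n ih =>
      intro BB hBB0 hdvd hdeg hN
      by_cases hcop2 : IsCoprime BB s
      · exact FINAL BB hBB0 hdvd hcop2 hN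
      · set G := EuclideanDomain.gcd BB s with hGdef
        have hGdvd1 : G ∣ BB := EuclideanDomain.gcd_dvd_left _ _
        have hGdvd2 : G ∣ s := EuclideanDomain.gcd_dvd_right _ _
        have hG0 : G ≠ 0 := fun h => hBB0 (EuclideanDomain.gcd_eq_zero_iff.mp h).1
        have hGne : G.natDegree ≠ 0 := by
          intro hdeg0
          apply hcop2
          have hc0 : G.coeff 0 ≠ 0 := by
            intro h
            apply hG0
            rw [Polynomial.eq_C_of_natDegree_eq_zero hdeg0, h, map_zero]
          have hab := EuclideanDomain.gcd_eq_gcd_ab BB s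
          have hGu : IsUnit G := by
            rw [Polynomial.eq_C_of_natDegree_eq_zero hdeg0]
            exact Polynomial.isUnit_C.mpr (isUnit_iff_ne_zero.mpr hc0)
          obtain ⟨v, hv⟩ := isUnit_iff_exists_inv.mp hGu
          refine ⟨v * EuclideanDomain.gcdA BB s, v * EuclideanDomain.gcdB BB s, ?_⟩
          linear_combination (-v) * hab + hv
        set BB' := BB / G with hBB'def
        have hBBe : G * BB' = BB := EuclideanDomain.mul_div_cancel' hG0 hGdvd1
        have hBB'0 : BB' ≠ 0 := by
          intro h; rw [h, mul_zero] at hBBe; exact hBB0 hBBe.symm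
        have hBB'dvd : BB' ∣ g := dvd_trans ⟨G, by rw [← hBBe]; ring⟩ hdvd
        have hBB'γ : BB'.natDegree ≤ γ := Polynomial.natDegree_le_of_dvd hBB'dvd hg0
        have hdegBB : BB.natDegree = G.natDegree + BB'.natDegree := by
          rw [← hBBe]; exact natDegree_mul hG0 hBB'0
        have hsGe : G * (s / G) = s := EuclideanDomain.mul_div_cancel' hG0 hGdvd2
        have hsG0 : s / G ≠ 0 := by
          intro h; rw [h, mul_zero] at hsGe; exact hs0 hsGe.symm
        have hsGdeg : s.natDegree = G.natDegree + (s/G).natDegree := by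
          have h' := natDegree_mul hG0 hsG0
          rw [hsGe] at h'
          exact h'
        -- per-product nullity
        have PP : ∀ ht : Polynomial ℝ, ht.natDegree ≤ γ - BB'.natDegree →
            ∀ w' : Polynomial ℝ, w'.natDegree ≤ d + c → L (BB' * (ht * w')) = 0 := by
          intro ht hht w' hw'
          have hBBγ : BB.natDegree ≤ γ := Polynomial.natDegree_le_of_dvd hdvd hg0
          set h := BB' * ht with hhdef
          have hhdeg : h.natDegree ≤ e := le_trans natDegree_mul_le (by omega)
          have hnull : L (s * h^2) = 0 := by
            have hig : s * h^2 = BB * ((s/G) * (BB' * ht^2)) := by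
              rw [hhdef]
              linear_combination (-(BB'^2*ht^2)) * hsGe + ((s/G)*BB'*ht^2) * hBBe
            rw [hig]
            apply hN
            have hd1 : ((s/G) * (BB' * ht^2)).natDegree
                ≤ (s/G).natDegree + (BB'.natDegree + 2*ht.natDegree) := by
              refine le_trans natDegree_mul_le ?_
              have := natDegree_mul_le (p := BB') (q := ht^2)
              rw [natDegree_pow] at this
              omega
            omega
          obtain ⟨v₁, v₂, hv₁, hv₂, hrep⟩ := REPR w' hw'
          have hre : BB' * (ht * w') = h * (u₂'*v₁ - u₁'*v₂) := by
            rw [← hrep, hhdef]; ring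
          rw [hre]
          exact K2 h hhdeg hnull v₁ v₂ hv₁ hv₂
        apply ih BB' hBB'0 hBB'dvd (by omega)
        intro w hw
        conv_lhs => rw [Polynomial.as_sum_range' w (w.natDegree+1) (lt_add_one _)]
        rw [Finset.mul_sum, map_sum]
        apply Finset.sum_eq_zero
        intro n' hn'
        have hn'' : n' ≤ d + D - BB'.natDegree := by
          have := Finset.mem_range.mp hn'
          omega
        set a := min n' (γ - BB'.natDegree) with ha
        have hsplit : (Polynomial.monomial n' (w.coeff n') : Polynomial ℝ)
            = (Polynomial.C (w.coeff n') * Polynomial.X^a) * Polynomial.X^(n' - a) := by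
          rw [mul_assoc, ← pow_add, show a + (n' - a) = n' by omega,
            Polynomial.C_mul_X_pow_eq_monomial]
        rw [hsplit]
        apply PP
        · refine le_trans (Polynomial.natDegree_C_mul_le _ _) ?_
          refine le_trans (Polynomial.natDegree_X_pow_le _) ?_
          omega
        · refine le_trans (Polynomial.natDegree_X_pow_le _) ?_
          omega
  intro q hq
  refine ITER γ g hg0 dvd_rfl le_rfl ?_ q hq
  intro w hw
  exact N₀ w (by omega)
noncomputable def dotL {m : ℕ} (r : Fin m → ℝ) : (Fin m → ℝ) →ₗ[ℝ] ℝ where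
  toFun v := ∑ i, v i * r i
  map_add' x y := by simp [add_mul, Finset.sum_add_distrib]
  map_smul' t x := by simp [Finset.mul_sum, mul_assoc]

open MvPolynomial

/-- Sum of squares optimization: if there is a sum of squares `p` with `B(p) = b`, then any
second-order critical point of `f_B(u) = ‖B(σ(u)) − b‖²` satisfies `B(u₁² + u₂²) = b`. -/
theorem sos_optimization_no_spurious_socp
    (m d : ℕ)
    (B : MvPolynomial (Fin 2) ℝ →ₗ[ℝ] (Fin m → ℝ))
    (b : Fin m → ℝ)
    (hfeas : ∃ p : MvPolynomial (Fin 2) ℝ, p.IsHomogeneous (2 * d) ∧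
      (∃ (N : ℕ) (t : Fin N → MvPolynomial (Fin 2) ℝ),
        (∀ i, (t i).IsHomogeneous d) ∧ p = ∑ i, (t i) ^ 2) ∧
      B p = b)
    (u₁ u₂ : MvPolynomial (Fin 2) ℝ)
    (hu₁ : u₁.IsHomogeneous d) (hu₂ : u₂.IsHomogeneous d)
    (hgrad : ∀ v₁ v₂ : MvPolynomial (Fin 2) ℝ, v₁.IsHomogeneous d → v₂.IsHomogeneous d →
      ∑ i, B (u₁ * v₁ + u₂ * v₂) i * (B (u₁ ^ 2 + u₂ ^ 2) i - b i) = 0)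
    (hhess : ∀ v₁ v₂ : MvPolynomial (Fin 2) ℝ, v₁.IsHomogeneous d → v₂.IsHomogeneous d →
      0 ≤ (∑ i, B (v₁ ^ 2 + v₂ ^ 2) i * (B (u₁ ^ 2 + u₂ ^ 2) i - b i))
        + 2 * ∑ i, (B (u₁ * v₁ + u₂ * v₂) i) ^ 2) :
    B (u₁ ^ 2 + u₂ ^ 2) = b := by
  obtain ⟨p, hphom, ⟨N, t, ht, hpt⟩, hBp⟩ := hfeas
  set r : Fin m → ℝ := fun i => B (u₁ ^ 2 + u₂ ^ 2) i - b i with hrdef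
  set NN : Polynomial ℝ →ₗ[ℝ] (Fin m → ℝ) := B.comp (hmL (2*d)) with hNNdef
  set L : Polynomial ℝ →ₗ[ℝ] ℝ := (dotL r).comp NN with hLdef
  have hLapp : ∀ w : Polynomial ℝ, L w = ∑ i, B (hmL (2*d) w) i * r i := fun w => rfl
  have hmm : ∀ v₁ v₂ : Polynomial ℝ, v₁.natDegree ≤ d → v₂.natDegree ≤ d →
      hmL (2*d) (v₁ * v₂) = hmL d v₁ * hmL d v₂ := by
    intro v₁ v₂ h1 h2
    rw [two_mul]
    exact hm_mul d d v₁ v₂ h1 h2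
  have hu1deg : (dh u₁).natDegree ≤ d := dh_natDegree_le hu₁
  have hu2deg : (dh u₂).natDegree ≤ d := dh_natDegree_le hu₂
  have hGcore : ∀ v₁ v₂ : Polynomial ℝ, v₁.natDegree ≤ d → v₂.natDegree ≤ d →
      L (dh u₁ * v₁ + dh u₂ * v₂) = 0 := by
    intro v₁ v₂ h1 h2
    have hid : hmL (2*d) (dh u₁ * v₁ + dh u₂ * v₂) = u₁ * hmL d v₁ + u₂ * hmL d v₂ := by
      rw [map_add, hmm _ _ hu1deg h1, hmm _ _ hu2deg h2, hm_dh hu₁, hm_dh hu₂]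
    rw [hLapp, hid]
    exact hgrad (hmL d v₁) (hmL d v₂) (hm_isHomogeneous d v₁) (hm_isHomogeneous d v₂)
  have hHcore : ∀ v₁ v₂ : Polynomial ℝ, v₁.natDegree ≤ d → v₂.natDegree ≤ d →
      0 ≤ L (v₁^2 + v₂^2) + 2 * ∑ i, (NN (dh u₁ * v₁ + dh u₂ * v₂) i)^2 := by
    intro v₁ v₂ h1 h2
    have hid : hmL (2*d) (dh u₁ * v₁ + dh u₂ * v₂) = u₁ * hmL d v₁ + u₂ * hmL d v₂ := by
      rw [map_add, hmm _ _ hu1deg h1, hmm _ _ hu2deg h2, hm_dh hu₁, hm_dh hu₂]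
    have hid2 : hmL (2*d) (v₁^2 + v₂^2) = (hmL d v₁)^2 + (hmL d v₂)^2 := by
      rw [map_add, pow_two, pow_two, hmm _ _ h1 h1, hmm _ _ h2 h2, ← pow_two, ← pow_two]
    have hkey := hhess (hmL d v₁) (hmL d v₂) (hm_isHomogeneous d v₁) (hm_isHomogeneous d v₂)
    rw [hLapp, hid2]
    have hNNid : NN (dh u₁ * v₁ + dh u₂ * v₂) = B (u₁ * hmL d v₁ + u₂ * hmL d v₂) := by
      rw [hNNdef]; simp only [LinearMap.comp_apply]; rw [hid]
    rw [hNNid]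
    exact hkey
  have hcore := core d NN L (dh u₁) (dh u₂) hu1deg hu2deg hGcore hHcore
  -- apply to each square t j
  have hsq : ∀ j : Fin N, 0 ≤ ∑ i, B ((t j)^2) i * r i := by
    intro j
    have hdeg : (dh (t j)).natDegree ≤ d := dh_natDegree_le (ht j)
    have h0 := hcore (dh (t j)) hdeg
    have hid : hmL (2*d) ((dh (t j))^2) = (t j)^2 := by
      rw [pow_two, hmm _ _ hdeg hdeg, hm_dh (ht j), ← pow_two]
    rw [hLapp, hid] at h0
    exact h0
  have hbr : 0 ≤ ∑ i, b i * r i := by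
    have hbi : ∀ i, b i = ∑ j, B ((t j)^2) i := by
      intro i
      rw [← hBp, hpt, map_sum]
      simp
    have : ∑ i, b i * r i = ∑ j, ∑ i, B ((t j)^2) i * r i := by
      rw [Finset.sum_comm]
      apply Finset.sum_congr rfl
      intro i _
      rw [hbi i, Finset.sum_mul]
    rw [this]
    exact Finset.sum_nonneg fun j _ => hsq j
  have hσr : ∑ i, B (u₁^2 + u₂^2) i * r i = 0 := by
    have h0 := hgrad u₁ u₂ hu₁ hu₂
    have hid : u₁ * u₁ + u₂ * u₂ = u₁^2 + u₂^2 := by ring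
    rw [hid] at h0
    exact h0
  have hsum : ∑ i, r i * r i ≤ 0 := by
    have hid : ∑ i, r i * r i = (∑ i, B (u₁^2 + u₂^2) i * r i) - ∑ i, b i * r i := by
      rw [← Finset.sum_sub_distrib]
      apply Finset.sum_congr rfl
      intro i _
      have : r i = B (u₁^2 + u₂^2) i - b i := rfl
      rw [this]; ring
    rw [hid, hσr]
    linarith
  have hnn : ∀ i ∈ Finset.univ, 0 ≤ r i * r i := fun i _ => mul_self_nonneg _
  have hzero : ∑ i, r i * r i = 0 := le_antisymm hsum (Finset.sum_nonneg hnn)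
  funext i
  have hri : r i * r i = 0 := (Finset.sum_eq_zero_iff_of_nonneg hnn).mp hzero i (Finset.mem_univ i)
  have : r i = 0 := mul_self_eq_zero.mp hri
  have hri2 : B (u₁ ^ 2 + u₂ ^ 2) i - b i = 0 := this
  linarith
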